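/- Let S be a set of 8 points in the plane in general position, partitioned into two color classes R and B with |R| ≠ |B|. Then S contains a monochromatic empty triangle, i.e., three points of the same color whose triangle contains no point of S in its interior. -/

import Mathlib

open scoped Classical

set_option maxHeartbeats 1000000

noncomputable section

/-- A planar point set is in general position if no three distinct points are collinear. -/
def GenPos (S : Set (ℝ × ℝ)) : Prop :=
  ∀ p ∈ S, ∀ q ∈ S, ∀ r ∈ S, p ≠ q → p ≠ r → q ≠ r →
    ¬ Collinear ℝ ({p, q, r} : Set (ℝ × ℝ))

/-- Number of points of `S` strictly inside the triangle `a b c`. -/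
def triPts (S : Finset (ℝ × ℝ)) (a b c : ℝ × ℝ) : ℕ :=
  (S.filter (fun p => p ∈ interior (convexHull ℝ ({a, b, c} : Set (ℝ × ℝ))))).card

/-- `S` (colored by `χ`) contains a monochromatic triangle with at most `s` interior points. -/
def MonoTriangle {c : ℕ} (S : Finset (ℝ × ℝ)) (χ : ℝ × ℝ → Fin c) (s : ℕ) : Prop :=
  ∃ a ∈ S, ∃ b ∈ S, ∃ d ∈ S, a ≠ b ∧ a ≠ d ∧ b ≠ d ∧
    χ a = χ b ∧ χ b = χ d ∧ triPts S a b d ≤ s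

abbrev Pt := ℝ × ℝ

def cp (u w : Pt) : ℝ := u.1 * w.2 - u.2 * w.1

lemma cp_antisymm (u w : Pt) : cp u w = - cp w u := by simp only [cp]; ring

lemma cp_self (u : Pt) : cp u u = 0 := by simp only [cp]; ring

def dOK (u : Pt) : Prop := 0 < u.1 ∨ (u.1 = 0 ∧ 0 < u.2)

lemma dOK_nonneg {u : Pt} (h : dOK u) : 0 ≤ u.1 := by
  rcases h with h | h
  · linarith
  · linarith [h.1.le]

lemma cp_trans {a b c : Pt} (ha : dOK a) (hb : dOK b) (hc : dOK c)
    (hab : 0 < cp a b) (hbc : 0 < cp b c) : 0 < cp a c := by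
  have hb1 : 0 < b.1 := by
    rcases hb with h | h
    · exact h
    · exfalso
      have hcc : cp b c = - (b.2 * c.1) := by simp [cp, h.1]
      have hc1 := dOK_nonneg hc
      nlinarith [h.2]
  have ha1 : 0 < a.1 := by
    rcases ha with h | h
    · exact h
    · exfalso
      have hcc : cp a b = - (a.2 * b.1) := by simp [cp, h.1]
      nlinarith [h.2]
  have key : b.1 * cp a c = a.1 * cp b c + c.1 * cp a b := by simp only [cp]; ring
  have hc1 := dOK_nonneg hc
  nlinarith

lemma cp_decomp (u w z : Pt) (h : cp u w ≠ 0) :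
    z = (cp z w / cp u w) • u + (cp u z / cp u w) • w := by
  have h1 : z.1 = (cp z w * u.1 + cp u z * w.1) / cp u w := by
    rw [eq_div_iff h]; simp only [cp]; ring
  have h2 : z.2 = (cp z w * u.2 + cp u z * w.2) / cp u w := by
    rw [eq_div_iff h]; simp only [cp]; ring
  ext
  · simpa [div_mul_eq_mul_div, ← add_div] using h1
  · simpa [div_mul_eq_mul_div, ← add_div] using h2

lemma cp_zero_right (u : Pt) : cp u 0 = 0 := by simp [cp]
lemma cp_zero_left (u : Pt) : cp 0 u = 0 := by simp [cp]
lemma sub_self_pt (v : Pt) : v - v = (0 : Pt) := by abel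
lemma cp_neg_left (u w : Pt) : cp (-u) w = - cp u w := by
  simp only [cp, Prod.fst_neg, Prod.snd_neg]; ring
lemma cp_ne_zero_left {u w : Pt} (h : cp u w ≠ 0) : u ≠ 0 := by
  rintro rfl; simp [cp] at h
lemma halfplane_interior (f : Pt → ℝ)
    (hadd : ∀ x y : Pt, f (x + y) = f x + f y)
    (hsmul : ∀ (t : ℝ) (x : Pt), f (t • x) = t * f x)
    (w : Pt) (hw : 0 < f w) (c : ℝ) :
    interior {z : Pt | f z ≤ c} ⊆ {z : Pt | f z < c} := by
  intro z hz
  have hzmem : z ∈ {z : Pt | f z ≤ c} := interior_subset hz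
  rw [Set.mem_setOf_eq] at hzmem
  rcases lt_or_eq_of_le hzmem with h | h
  · exact h
  · exfalso
    rw [mem_interior_iff_mem_nhds, Metric.mem_nhds_iff] at hz
    obtain ⟨ε, hε, hball⟩ := hz
    have hwn : 0 < ‖w‖ := by
      rcases eq_or_ne w 0 with rfl | hw0
      · have : f (0 : Pt) = 0 := by
          have := hsmul 0 0; simpa using this
        simp [this] at hw
      · exact norm_pos_iff.mpr hw0
    set δ : ℝ := ε / (2 * ‖w‖) with hδdef
    have hδ : 0 < δ := by positivity
    have hmem : z + δ • w ∈ Metric.ball z ε := by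
      rw [Metric.mem_ball, dist_eq_norm]
      have : z + δ • w - z = δ • w := by abel
      rw [this, norm_smul]
      simp only [Real.norm_eq_abs, abs_of_pos hδ]
      rw [hδdef]
      rw [div_mul_eq_mul_div]
      rw [div_lt_iff₀ (by positivity)]
      nlinarith
    have := hball hmem
    have hfz : f (z + δ • w) = f z + δ * f w := by rw [hadd, hsmul]
    have : f (z + δ • w) ≤ c := this
    rw [hfz, h] at this
    nlinarith

lemma cp_linear_add (u : Pt) : ∀ x y : Pt, cp u (x + y) = cp u x + cp u y := by
  intro x y; simp only [cp, Prod.fst_add, Prod.snd_add]; ring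

lemma cp_linear_smul (u : Pt) : ∀ (t : ℝ) (x : Pt), cp u (t • x) = t * cp u x := by
  intro t x; simp only [cp, Prod.smul_fst, Prod.smul_snd, smul_eq_mul]; ring

lemma cp_sub (u z w : Pt) : cp u (z - w) = cp u z - cp u w := by
  simp only [cp, Prod.fst_sub, Prod.snd_sub]; ring

/-- key lemma : interior of convex hull of a set contained in a closed halfplane
is in the open halfplane. -/
lemma cone_interior (u : Pt) (hu : u ≠ 0) (v : Pt) (s : Set Pt)
    (hs : ∀ p ∈ s, 0 ≤ cp u (p - v)) :
    interior (convexHull ℝ s) ⊆ {z : Pt | 0 < cp u (z - v)} := by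
  set f : Pt → ℝ := fun z => - cp u z with hf
  have hadd : ∀ x y : Pt, f (x + y) = f x + f y := by
    intro x y; simp only [hf, cp_linear_add]; ring
  have hsmul : ∀ (t : ℝ) (x : Pt), f (t • x) = t * f x := by
    intro t x; simp only [hf, cp_linear_smul]; ring
  have hlin : IsLinearMap ℝ f := ⟨hadd, by intro t x; rw [hsmul]; rfl⟩
  set c : ℝ := - cp u v with hc
  have hsub : s ⊆ {z : Pt | f z ≤ c} := by
    intro p hp
    have := hs p hp
    rw [cp_sub] at this
    simp only [hf, hc, Set.mem_setOf_eq]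
    linarith
  have hconv : Convex ℝ {z : Pt | f z ≤ c} := convex_halfSpace_le hlin c
  have h1 : convexHull ℝ s ⊆ {z : Pt | f z ≤ c} := convexHull_min hsub hconv
  have h2 : interior (convexHull ℝ s) ⊆ interior {z : Pt | f z ≤ c} :=
    interior_mono h1
  have hwit : 0 < f (u.2, -u.1) := by
    simp only [hf, cp]
    have : ¬ (u.1 = 0 ∧ u.2 = 0) := by
      intro h; exact hu (Prod.ext h.1 h.2)
    rcases eq_or_ne u.1 0 with h1' | h1'
    · rcases eq_or_ne u.2 0 with h2' | h2'
      · exact absurd ⟨h1', h2'⟩ this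
      · nlinarith [mul_self_pos.mpr h2', mul_self_nonneg u.1]
    · nlinarith [mul_self_pos.mpr h1', mul_self_nonneg u.2]
  have h3 := halfplane_interior f hadd hsmul _ hwit c
  intro z hz
  have := h3 (h2 hz)
  simp only [Set.mem_setOf_eq, hf, hc] at this ⊢
  rw [cp_sub]; linarith

/-- The interior of triangle v,x,y (positively oriented) is inside the open cone at v. -/
lemma tri_subset_cone (v x y : Pt) (hxy : 0 < cp (x - v) (y - v)) :
    interior (convexHull ℝ ({v, x, y} : Set Pt)) ⊆
      {z : Pt | 0 < cp (x - v) (z - v) ∧ 0 < cp (z - v) (y - v)} := by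
  have hx0 : x - v ≠ 0 := cp_ne_zero_left hxy.ne'
  have hy0 : (v - y : Pt) ≠ 0 := by
    intro h0
    have h1 : y - v = (0 : Pt) := by
      have h2 : y - v = -(v - y) := by abel
      rw [h2, h0]; simp
    rw [h1, cp_zero_right] at hxy; exact lt_irrefl _ hxy
  intro z hz
  constructor
  · refine cone_interior (x - v) hx0 v _ ?_ hz
    rintro p (rfl | rfl | rfl)
    · rw [sub_self_pt, cp_zero_right]
    · rw [cp_self]
    · exact hxy.le
  · have key := cone_interior (v - y) hy0 v {v, x, y} ?_ hz
    · have h2 : 0 < cp (v - y) (z - v) := key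
      have he : cp (z - v) (y - v) = cp (v - y) (z - v) := by
        simp only [cp, Prod.fst_sub, Prod.snd_sub]; ring
      rw [he]; exact h2
    · rintro p (rfl | rfl | rfl)
      · rw [sub_self_pt, cp_zero_right]
      · have he : cp (v - y) (p - v) = cp (p - v) (y - v) := by
          simp only [cp, Prod.fst_sub, Prod.snd_sub]; ring
        rw [he]; exact hxy.le
      · have he : cp (v - p) (p - v) = 0 := by
          simp only [cp, Prod.fst_sub, Prod.snd_sub]; ring
        rw [he]

/-- A vertex of a nondegenerate triangle is not in the interior. -/
lemma vertex_not_mem_interior {a b c : Pt} (h : cp (b - a) (c - a) ≠ 0) :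
    a ∉ interior (convexHull ℝ ({a, b, c} : Set Pt)) := by
  have hs : cp (c - b) (b - a) = - cp (b - a) (c - a) := by
    simp only [cp, Prod.fst_sub, Prod.snd_sub]; ring
  have hcc : cp (c - b) (c - a) = cp (c - b) (b - a) := by
    simp only [cp, Prod.fst_sub, Prod.snd_sub]; ring
  have hsne : cp (c - b) (b - a) ≠ 0 := by rw [hs]; simpa using h
  have hb0 : (c - b : Pt) ≠ 0 := cp_ne_zero_left hsne
  have hb0' : (b - c : Pt) ≠ 0 := by
    intro h0
    apply hb0
    have : c - b = -(b - c) := by abel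
    rw [this, h0]; simp
  rcases hsne.lt_or_gt with hneg | hpos
  · intro hmem
    have key := cone_interior (b - c) hb0' a {a, b, c} ?_ hmem
    · simp only [Set.mem_setOf_eq, sub_self_pt, cp_zero_right] at key
      exact lt_irrefl _ key
    · rintro p (rfl | rfl | rfl)
      · rw [sub_self_pt, cp_zero_right]
      · have he : cp (p - c) (p - a) = - cp (c - p) (p - a) := by
          simp only [cp, Prod.fst_sub, Prod.snd_sub]; ring
        rw [he]; linarith
      · have he : cp (b - p) (p - a) = - cp (p - b) (p - a) := by
          simp only [cp, Prod.fst_sub, Prod.snd_sub]; ring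
        rw [he, hcc]; linarith
  · intro hmem
    have key := cone_interior (c - b) hb0 a {a, b, c} ?_ hmem
    · simp only [Set.mem_setOf_eq, sub_self_pt, cp_zero_right] at key
      exact lt_irrefl _ key
    · rintro p (rfl | rfl | rfl)
      · rw [sub_self_pt, cp_zero_right]
      · linarith
      · rw [hcc]; linarith

lemma exists_cp_min (v : Pt) (P : Finset Pt) (hd : ∀ p ∈ P, dOK (p - v))
    (hcp : ∀ p ∈ P, ∀ q ∈ P, p ≠ q → cp (p - v) (q - v) ≠ 0) (hne : P.Nonempty) :
    ∃ m ∈ P, ∀ q ∈ P, q ≠ m → 0 < cp (m - v) (q - v) := by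
  classical
  induction P using Finset.strongInduction with
  | _ P ih =>
    obtain ⟨a, ha⟩ := hne
    by_cases h : (P.erase a).Nonempty
    · obtain ⟨m', hm'P, hm'⟩ := ih (P.erase a) (Finset.erase_ssubset ha)
        (fun p hp => hd p (Finset.mem_of_mem_erase hp))
        (fun p hp q hq hpq => hcp p (Finset.mem_of_mem_erase hp) q
          (Finset.mem_of_mem_erase hq) hpq) h
      have hm'P' : m' ∈ P := Finset.mem_of_mem_erase hm'P
      have ham' : m' ≠ a := Finset.ne_of_mem_erase hm'P
      by_cases hc : 0 < cp (a - v) (m' - v)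
      · refine ⟨a, ha, fun q hq hqa => ?_⟩
        have hq' : q ∈ P.erase a := Finset.mem_erase.mpr ⟨hqa, hq⟩
        rcases eq_or_ne q m' with rfl | hqm
        · exact hc
        · exact cp_trans (hd a ha) (hd m' hm'P') (hd q hq) hc (hm' q hq' hqm)
      · have hne' : cp (a - v) (m' - v) ≠ 0 := hcp a ha m' hm'P' (Ne.symm ham')
        have hpos : 0 < cp (m' - v) (a - v) := by
          have h0 : cp (a - v) (m' - v) < 0 := lt_of_le_of_ne (not_lt.mp hc) hne'
          have h2 := cp_antisymm (a - v) (m' - v)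
          linarith
        refine ⟨m', hm'P', fun q hq hqm => ?_⟩
        rcases eq_or_ne q a with rfl | hqa
        · exact hpos
        · exact hm' q (Finset.mem_erase.mpr ⟨hqa, hq⟩) hqm
    · have : P = {a} := by
        apply Finset.eq_singleton_iff_unique_mem.mpr
        refine ⟨ha, fun x hx => ?_⟩
        by_contra hxa
        exact h ⟨x, Finset.mem_erase.mpr ⟨hxa, hx⟩⟩
      subst this
      refine ⟨a, Finset.mem_singleton_self a, fun q hq hqa => ?_⟩
      exact absurd (Finset.mem_singleton.mp hq) hqa

lemma exists_sorted (v : Pt) (P : Finset Pt) (hd : ∀ p ∈ P, dOK (p - v))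
    (hcp : ∀ p ∈ P, ∀ q ∈ P, p ≠ q → cp (p - v) (q - v) ≠ 0) :
    ∃ l : List Pt, l.Nodup ∧ (∀ p, p ∈ l ↔ p ∈ P) ∧
      l.Pairwise (fun p q => 0 < cp (p - v) (q - v)) ∧ l.length = P.card := by
  classical
  induction P using Finset.strongInduction with
  | _ P ih =>
    rcases P.eq_empty_or_nonempty with rfl | hne
    · exact ⟨[], by simp, by simp, by simp, by simp⟩
    · obtain ⟨m, hmP, hmin⟩ := exists_cp_min v P hd hcp hne
      obtain ⟨l', hnd', hmem', hpw', hlen'⟩ := ih (P.erase m) (Finset.erase_ssubset hmP)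
        (fun p hp => hd p (Finset.mem_of_mem_erase hp))
        (fun p hp q hq hpq => hcp p (Finset.mem_of_mem_erase hp) q
          (Finset.mem_of_mem_erase hq) hpq)
      refine ⟨m :: l', ?_, ?_, ?_, ?_⟩
      · refine List.nodup_cons.mpr ⟨?_, hnd'⟩
        intro hm
        exact (Finset.notMem_erase m P) ((hmem' m).mp hm)
      · intro p
        simp only [List.mem_cons, hmem', Finset.mem_erase]
        constructor
        · rintro (rfl | ⟨_, hp⟩)
          · exact hmP
          · exact hp
        · intro hp
          rcases eq_or_ne p m with rfl | hpm
          · exact Or.inl rfl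
          · exact Or.inr ⟨hpm, hp⟩
      · refine List.pairwise_cons.mpr ⟨?_, hpw'⟩
        intro q hq
        have := (hmem' q).mp hq
        rw [Finset.mem_erase] at this
        exact hmin q this.2 this.1
      · have hc1 : 1 ≤ P.card := Finset.card_pos.mpr hne
        simp only [List.length_cons, hlen', Finset.card_erase_of_mem hmP]
        omega

lemma cone_dOK {a b z : Pt} (ha : dOK a) (hb : dOK b) (hab : 0 < cp a b)
    (h1 : 0 < cp a z) (h2 : 0 < cp z b) : dOK z := by
  have ha1 : 0 < a.1 := by
    rcases ha with h | h
    · exact h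
    · exfalso
      have hcc : cp a b = - (a.2 * b.1) := by simp [cp, h.1]
      have := dOK_nonneg hb
      nlinarith [h.2]
  have hdec := cp_decomp a b z hab.ne'
  have hz1 := congrArg Prod.fst hdec
  simp only [Prod.fst_add, Prod.smul_fst, smul_eq_mul] at hz1
  left
  rw [hz1]
  have c1 : 0 < cp z b / cp a b := div_pos h2 hab
  have c2 : 0 < cp a z / cp a b := div_pos h1 hab
  have := dOK_nonneg hb
  nlinarith

section Fan
variable (v : Pt) (l : List Pt)

lemma fan_cone (hpw : l.Pairwise (fun p q => 0 < cp (p - v) (q - v)))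
    {i j : ℕ} (hi : i < l.length) (hj : j < l.length) (hij : i < j) :
    0 < cp (l[i] - v) (l[j] - v) :=
  List.pairwise_iff_getElem.mp hpw i j hi hj hij

lemma fan_empty (hd : ∀ p ∈ l, dOK (p - v))
    (hpw : l.Pairwise (fun p q => 0 < cp (p - v) (q - v)))
    {i : ℕ} (hi1 : i + 1 < l.length) (q : Pt) (hq : q = v ∨ q ∈ l) :
    q ∉ interior (convexHull ℝ ({v, l[i]'(by omega), l[i+1]'hi1} : Set Pt)) := by
  intro hmem
  have hcone := tri_subset_cone v _ _
    (fan_cone v l hpw (by omega) hi1 (by omega)) hmem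
  obtain ⟨hc1, hc2⟩ := hcone
  rcases hq with rfl | hq
  · rw [sub_self_pt, cp_zero_right] at hc1
    exact lt_irrefl _ hc1
  · obtain ⟨j, hj, rfl⟩ := List.mem_iff_getElem.mp hq
    rcases lt_trichotomy j i with h | h | h
    · have := fan_cone v l hpw hj (by omega : i < l.length) h
      have h2 := cp_antisymm (l[i]'(by omega) - v) (l[j]'hj - v)
      linarith
    · subst h
      rw [cp_self] at hc1
      exact lt_irrefl _ hc1
    · rcases eq_or_lt_of_le (Nat.succ_le_of_lt h) with h' | h'
      · have : l[j]'hj = l[i+1]'hi1 := by congr 1; omega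
        rw [this, cp_self] at hc2
        exact lt_irrefl _ hc2
      · have := fan_cone v l hpw hi1 hj h'
        have h2 := cp_antisymm (l[j]'hj - v) (l[i+1]'hi1 - v)
        linarith

lemma fan_disjoint (hd : ∀ p ∈ l, dOK (p - v))
    (hpw : l.Pairwise (fun p q => 0 < cp (p - v) (q - v)))
    {i j : ℕ} (hi1 : i + 1 < l.length) (hj1 : j + 1 < l.length) (hij : i < j)
    (z : Pt)
    (hzi : z ∈ interior (convexHull ℝ ({v, l[i]'(by omega), l[i+1]'hi1} : Set Pt)))
    (hzj : z ∈ interior (convexHull ℝ ({v, l[j]'(by omega), l[j+1]'hj1} : Set Pt))) :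
    False := by
  obtain ⟨hi1', hi2'⟩ := tri_subset_cone v _ _
    (fan_cone v l hpw (by omega) hi1 (by omega)) hzi
  obtain ⟨hj1', hj2'⟩ := tri_subset_cone v _ _
    (fan_cone v l hpw (by omega) hj1 (by omega)) hzj
  have hdz : dOK (z - v) :=
    cone_dOK (hd _ (List.getElem_mem _)) (hd _ (List.getElem_mem _))
      (fan_cone v l hpw (by omega) hj1 (by omega)) hj1' hj2'
  rcases eq_or_lt_of_le (Nat.succ_le_of_lt hij) with h' | h'
  · have : l[i+1]'hi1 = l[j]'(by omega) := by congr 1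
    rw [this] at hi2'
    have h2 := cp_antisymm (z - v) (l[j]'(by omega) - v)
    linarith
  · have hcons := fan_cone v l hpw hi1 (by omega : j < l.length) h'
    have := cp_trans (hd _ (List.getElem_mem _)) (hd _ (List.getElem_mem _)) hdz hcons hj1'
    have h2 := cp_antisymm (z - v) (l[i+1]'hi1 - v)
    linarith

end Fan

lemma cp_lincomb (w x y : Pt) (s t : ℝ) :
    cp w (s • x + t • y) = s * cp w x + t * cp w y := by
  simp only [cp, Prod.fst_add, Prod.snd_add, Prod.smul_fst, Prod.smul_snd, smul_eq_mul]
  ring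

lemma cp_pos_of_cone {x y z w : Pt} (hxy : 0 < cp x y) (h1 : 0 < cp x z)
    (h2 : 0 < cp z y) (hwx : 0 ≤ cp w x) (hwy : 0 ≤ cp w y)
    (hone : 0 < cp w x ∨ 0 < cp w y) : 0 < cp w z := by
  have hdec := cp_decomp x y z hxy.ne'
  have hval : cp w z = (cp z y / cp x y) * cp w x + (cp x z / cp x y) * cp w y := by
    calc cp w z = cp w ((cp z y / cp x y) • x + (cp x z / cp x y) • y) := by rw [← hdec]
    _ = _ := cp_lincomb _ _ _ _ _
  have c1 : 0 < cp z y / cp x y := div_pos h2 hxy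
  have c2 : 0 < cp x z / cp x y := div_pos h1 hxy
  rw [hval]
  rcases hone with h | h
  · nlinarith
  · nlinarith

/-- Cyclic fan around c0 over four cyclically ordered points. -/
lemma cyclic_core (c0 p0 p1 p2 p3 : Pt)
    (h01 : 0 < cp (p0-c0) (p1-c0)) (h12 : 0 < cp (p1-c0) (p2-c0))
    (h23 : 0 < cp (p2-c0) (p3-c0)) (h30 : 0 < cp (p3-c0) (p0-c0))
    (h03 : cp (p0-c0) (p3-c0) < 0)
    (h02 : cp (p0-c0) (p2-c0) ≠ 0) (h13 : cp (p1-c0) (p3-c0) ≠ 0) :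
    ∃ t : Fin 4 → Pt × Pt,
      (∀ i, ((t i).1 = p0 ∨ (t i).1 = p1 ∨ (t i).1 = p2 ∨ (t i).1 = p3) ∧
            ((t i).2 = p0 ∨ (t i).2 = p1 ∨ (t i).2 = p2 ∨ (t i).2 = p3) ∧
            0 < cp ((t i).1 - c0) ((t i).2 - c0)) ∧
      (∀ i, ∀ q : Pt, (q = c0 ∨ q = p0 ∨ q = p1 ∨ q = p2 ∨ q = p3) →
        q ∉ interior (convexHull ℝ ({c0, (t i).1, (t i).2} : Set Pt))) ∧
      (∀ i j, i ≠ j → ∀ z : Pt,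
        z ∈ interior (convexHull ℝ ({c0, (t i).1, (t i).2} : Set Pt)) →
        z ∉ interior (convexHull ℝ ({c0, (t j).1, (t j).2} : Set Pt))) := by
  set u0 := p0 - c0
  set u1 := p1 - c0
  set u2 := p2 - c0
  set u3 := p3 - c0
  -- cone membership characterizations
  have hT0 := tri_subset_cone c0 p0 p1 h01
  have hT1 := tri_subset_cone c0 p1 p2 h12
  have hT2 := tri_subset_cone c0 p2 p3 h23
  have hT3 := tri_subset_cone c0 p3 p0 h30
  refine ⟨![(p0,p1),(p1,p2),(p2,p3),(p3,p0)], ?_, ?_, ?_⟩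
  · intro i
    fin_cases i <;> simp_all <;> tauto
  · -- emptiness
    intro i q hq
    have hq0 : q = c0 → q - c0 = 0 := by rintro rfl; exact sub_self_pt _
    fin_cases i <;> intro hmem
    · obtain ⟨hc1, hc2⟩ := hT0 hmem
      rcases hq with rfl | rfl | rfl | rfl | rfl
      · rw [sub_self_pt, cp_zero_right] at hc1; exact lt_irrefl _ hc1
      · rw [cp_self] at hc1; exact lt_irrefl _ hc1
      · rw [cp_self] at hc2; exact lt_irrefl _ hc2
      · have := cp_antisymm u1 u2; simp only [u1, u2] at *; linarith
      · simp only [u0, u3] at *; linarith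
    · obtain ⟨hc1, hc2⟩ := hT1 hmem
      rcases hq with rfl | rfl | rfl | rfl | rfl
      · rw [sub_self_pt, cp_zero_right] at hc1; exact lt_irrefl _ hc1
      · have := cp_antisymm u0 u1; simp only [u0, u1] at *; linarith
      · rw [cp_self] at hc1; exact lt_irrefl _ hc1
      · rw [cp_self] at hc2; exact lt_irrefl _ hc2
      · have := cp_antisymm u2 u3; simp only [u2, u3] at *; linarith
    · obtain ⟨hc1, hc2⟩ := hT2 hmem
      rcases hq with rfl | rfl | rfl | rfl | rfl
      · rw [sub_self_pt, cp_zero_right] at hc1; exact lt_irrefl _ hc1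
      · simp only [u0, u3] at *; linarith
      · have := cp_antisymm u1 u2; simp only [u1, u2] at *; linarith
      · rw [cp_self] at hc1; exact lt_irrefl _ hc1
      · rw [cp_self] at hc2; exact lt_irrefl _ hc2
    · obtain ⟨hc1, hc2⟩ := hT3 hmem
      rcases hq with rfl | rfl | rfl | rfl | rfl
      · rw [sub_self_pt, cp_zero_right] at hc1; exact lt_irrefl _ hc1
      · rw [cp_self] at hc2; exact lt_irrefl _ hc2
      · have := cp_antisymm u0 u1; simp only [u0, u1] at *; linarith
      · have := cp_antisymm u2 u3; simp only [u2, u3] at *; linarith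
      · rw [cp_self] at hc1; exact lt_irrefl _ hc1
  · -- disjointness
    intro i j hij z hzi hzj
    -- core facts per pair
    have adj01 : ∀ z : Pt, 0 < cp (z - c0) u1 → 0 < cp u1 (z - c0) → False := by
      intro z h1 h2; have := cp_antisymm (z - c0) u1; linarith
    have adj12 : ∀ z : Pt, 0 < cp (z - c0) u2 → 0 < cp u2 (z - c0) → False := by
      intro z h1 h2; have := cp_antisymm (z - c0) u2; linarith
    have adj23 : ∀ z : Pt, 0 < cp (z - c0) u3 → 0 < cp u3 (z - c0) → False := by
      intro z h1 h2; have := cp_antisymm (z - c0) u3; linarith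
    have adj30 : ∀ z : Pt, 0 < cp (z - c0) u0 → 0 < cp u0 (z - c0) → False := by
      intro z h1 h2; have := cp_antisymm (z - c0) u0; linarith
    have opp02 : ∀ z : Pt, (0 < cp u0 (z-c0) ∧ 0 < cp (z-c0) u1) →
        (0 < cp u2 (z-c0) ∧ 0 < cp (z-c0) u3) → False := by
      intro z hz0 hz2
      rcases h02.lt_or_gt with hneg | hpos
      · -- cp u0 u2 < 0 : functional -u0 on cone(u2,u3)
        have key : 0 < cp (-u0) (z - c0) := by
          apply cp_pos_of_cone h23 hz2.1 hz2.2
          · rw [cp_neg_left]; linarith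
          · rw [cp_neg_left]; linarith
          · left; rw [cp_neg_left]; linarith
        rw [cp_neg_left] at key; linarith [hz0.1]
      · -- cp u0 u2 > 0 : functional -u2 on cone(u0,u1)
        have key : 0 < cp (-u2) (z - c0) := by
          apply cp_pos_of_cone h01 hz0.1 hz0.2
          · rw [cp_neg_left]
            have := cp_antisymm u0 u2; linarith
          · rw [cp_neg_left]
            have := cp_antisymm u1 u2; linarith
          · left; rw [cp_neg_left]
            have := cp_antisymm u0 u2; linarith
        rw [cp_neg_left] at key; linarith [hz2.1]
    have opp13 : ∀ z : Pt, (0 < cp u1 (z-c0) ∧ 0 < cp (z-c0) u2) →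
        (0 < cp u3 (z-c0) ∧ 0 < cp (z-c0) u0) → False := by
      intro z hz1 hz3
      rcases h13.lt_or_gt with hneg | hpos
      · -- cp u1 u3 < 0 : functional -u1 on cone(u3,u0)
        have key : 0 < cp (-u1) (z - c0) := by
          apply cp_pos_of_cone h30 hz3.1 hz3.2
          · rw [cp_neg_left]; linarith
          · rw [cp_neg_left]
            have := cp_antisymm u0 u1; linarith
          · left; rw [cp_neg_left]; linarith
        rw [cp_neg_left] at key; linarith [hz1.1]
      · -- cp u1 u3 > 0 : functional -u3 on cone(u1,u2)
        have key : 0 < cp (-u3) (z - c0) := by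
          apply cp_pos_of_cone h12 hz1.1 hz1.2
          · rw [cp_neg_left]
            have := cp_antisymm u1 u3; linarith
          · rw [cp_neg_left]
            have := cp_antisymm u2 u3; linarith
          · left; rw [cp_neg_left]
            have := cp_antisymm u1 u3; linarith
        rw [cp_neg_left] at key; linarith [hz3.1]
    fin_cases i <;> fin_cases j <;> simp only [Matrix.cons_val_zero, Matrix.cons_val_one,
      Matrix.head_cons, Matrix.cons_val_two, Matrix.tail_cons, Matrix.cons_val_three] at hzi hzj hij ⊢
    · exact hij rfl
    · exact adj01 z (hT0 hzi).2 (hT1 hzj).1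
    · exact opp02 z (hT0 hzi) (hT2 hzj)
    · exact adj30 z (hT3 hzj).2 (hT0 hzi).1
    · exact adj01 z (hT0 hzj).2 (hT1 hzi).1
    · exact hij rfl
    · exact adj12 z (hT1 hzi).2 (hT2 hzj).1
    · exact opp13 z (hT1 hzi) (hT3 hzj)
    · exact opp02 z (hT0 hzj) (hT2 hzi)
    · exact adj12 z (hT1 hzj).2 (hT2 hzi).1
    · exact hij rfl
    · exact adj23 z (hT2 hzi).2 (hT3 hzj).1
    · exact adj30 z (hT3 hzi).2 (hT0 hzj).1
    · exact opp13 z (hT1 hzj) (hT3 hzi)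
    · exact adj23 z (hT2 hzj).2 (hT3 hzi).1
    · exact hij rfl


def CycConc (c0 : Pt) (Q : Finset Pt) : Prop :=
  ∃ t : Fin 4 → Pt × Pt,
    (∀ i, (t i).1 ∈ Q ∧ (t i).2 ∈ Q ∧ 0 < cp ((t i).1 - c0) ((t i).2 - c0)) ∧
    (∀ i, ∀ q : Pt, (q = c0 ∨ q ∈ Q) →
      q ∉ interior (convexHull ℝ ({c0, (t i).1, (t i).2} : Set Pt))) ∧
    (∀ i j, i ≠ j → ∀ z : Pt,
      z ∈ interior (convexHull ℝ ({c0, (t i).1, (t i).2} : Set Pt)) →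
      z ∉ interior (convexHull ℝ ({c0, (t j).1, (t j).2} : Set Pt)))

lemma cyclic_fan (c0 : Pt) (Q : Finset Pt) (hcard : Q.card = 4) (hc0 : c0 ∉ Q)
    (hcp : ∀ p ∈ Q, ∀ q ∈ Q, p ≠ q → cp (p - c0) (q - c0) ≠ 0)
    (hint : c0 ∈ interior (convexHull ℝ (Q : Set Pt))) : CycConc c0 Q := by
  classical
  have hp_contra : ∀ u : Pt, u ≠ 0 → (∀ q ∈ Q, 0 ≤ cp u (q - c0)) → False := by
    intro u hu h
    have key := cone_interior u hu c0 (Q : Set Pt) (fun p hp => h p hp) hint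
    simp only [Set.mem_setOf_eq, sub_self_pt, cp_zero_right] at key
    exact lt_irrefl _ key
  obtain ⟨q1, hq1⟩ : Q.Nonempty := by
    rw [← Finset.card_pos, hcard]; norm_num
  have herase : (Q.erase q1).card = 3 := by
    rw [Finset.card_erase_of_mem hq1, hcard]
  obtain ⟨x, y, z, hxy, hxz, hyz, hE⟩ := Finset.card_eq_three.mp herase
  have hxQ : x ∈ Q := Finset.mem_of_mem_erase (hE ▸ (by simp : x ∈ ({x,y,z} : Finset Pt)))
  have hyQ : y ∈ Q := Finset.mem_of_mem_erase (hE ▸ (by simp : y ∈ ({x,y,z} : Finset Pt)))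
  have hzQ : z ∈ Q := Finset.mem_of_mem_erase (hE ▸ (by simp : z ∈ ({x,y,z} : Finset Pt)))
  have hcover : ∀ p ∈ Q, p = q1 ∨ p = x ∨ p = y ∨ p = z := by
    intro p hp
    rcases eq_or_ne p q1 with rfl | hpq
    · exact Or.inl rfl
    · have : p ∈ Q.erase q1 := Finset.mem_erase.mpr ⟨hpq, hp⟩
      rw [hE] at this
      simp only [Finset.mem_insert, Finset.mem_singleton] at this
      tauto
  -- main finisher
  have main : ∀ a b c : Pt, a ∈ Q → b ∈ Q → c ∈ Q →
      (∀ p ∈ Q, p = q1 ∨ p = a ∨ p = b ∨ p = c) →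
      0 < cp (q1-c0) (a-c0) → 0 < cp (a-c0) (b-c0) → 0 < cp (b-c0) (c-c0) →
      cp (q1-c0) (c-c0) < 0 → CycConc c0 Q := by
    intro a b c haQ hbQ hcQ hcov h1a hab hbc h1c
    have haq1 : a ≠ q1 := by
      intro h; rw [h, cp_self] at h1a; exact lt_irrefl _ h1a
    have hcq1 : c ≠ q1 := by
      intro h; rw [h, cp_self] at h1c; exact lt_irrefl _ h1c
    have hbq1 : b ≠ q1 := by
      intro h
      rw [h] at hab
      have h1 := cp_antisymm (q1-c0) (a-c0); linarith
    have hac : a ≠ c := by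
      intro h
      rw [h] at h1a; linarith
    have h02 : cp (q1-c0) (b-c0) ≠ 0 := hcp q1 hq1 b hbQ (Ne.symm hbq1)
    have h13 : cp (a-c0) (c-c0) ≠ 0 := hcp a haQ c hcQ hac
    have h30 : 0 < cp (c-c0) (q1-c0) := by
      have h1 := cp_antisymm (q1-c0) (c-c0); linarith
    obtain ⟨t, ht1, ht2, ht3⟩ := cyclic_core c0 q1 a b c h1a hab hbc h30 h1c h02 h13
    refine ⟨t, ?_, ?_, ht3⟩
    · intro i
      obtain ⟨m1, m2, m3⟩ := ht1 i
      refine ⟨?_, ?_, m3⟩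
      · rcases m1 with rfl | rfl | rfl | rfl <;> assumption
      · rcases m2 with rfl | rfl | rfl | rfl <;> assumption
    · intro i q hq
      apply ht2 i q
      rcases hq with rfl | hq
      · exact Or.inl rfl
      · rcases hcov q hq with rfl | rfl | rfl | rfl <;> tauto
  -- helper for two positives
  have twoPos : ∀ a b c : Pt, a ∈ Q → b ∈ Q → c ∈ Q →
      (∀ p ∈ Q, p = q1 ∨ p = a ∨ p = b ∨ p = c) →
      0 < cp (q1-c0) (a-c0) → 0 < cp (q1-c0) (b-c0) →
      cp (q1-c0) (c-c0) < 0 → 0 < cp (a-c0) (b-c0) → CycConc c0 Q := by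
    intro a b c haQ hbQ hcQ hcov h1a h1b h1c hab
    have hbc : 0 < cp (b-c0) (c-c0) := by
      by_contra hn
      have hbcne : b ≠ c := by
        rintro rfl; linarith
      have hlt : cp (b-c0) (c-c0) < 0 :=
        lt_of_le_of_ne (not_lt.mp hn) (hcp b hbQ c hcQ hbcne)
      apply hp_contra (-(b-c0))
      · intro h0
        have : b - c0 = 0 := by
          have h2 : b - c0 = -(-(b-c0)) := by abel
          rw [h2, h0]; simp
        rw [this, cp_zero_left] at hlt; exact lt_irrefl _ hlt
      · intro q hqQ
        rw [cp_neg_left]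
        rcases hcov q hqQ with h | h | h | h <;> rw [h]
        · have h1 := cp_antisymm (b-c0) (q1-c0); linarith
        · have h1 := cp_antisymm (b-c0) (a-c0); linarith
        · simp [cp_self]
        · linarith
    exact main a b c haQ hbQ hcQ hcov h1a hab hbc h1c
  -- helper for one positive
  have onePos : ∀ a b c : Pt, a ∈ Q → b ∈ Q → c ∈ Q →
      (∀ p ∈ Q, p = q1 ∨ p = a ∨ p = b ∨ p = c) →
      0 < cp (q1-c0) (a-c0) → cp (q1-c0) (b-c0) < 0 →
      cp (q1-c0) (c-c0) < 0 → 0 < cp (b-c0) (c-c0) → CycConc c0 Q := by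
    intro a b c haQ hbQ hcQ hcov h1a h1b h1c hbc
    have hab : 0 < cp (a-c0) (b-c0) := by
      by_contra hn
      have habne : a ≠ b := by
        rintro rfl; linarith
      have hlt : cp (a-c0) (b-c0) < 0 :=
        lt_of_le_of_ne (not_lt.mp hn) (hcp a haQ b hbQ habne)
      apply hp_contra (b-c0)
      · intro h0
        rw [h0, cp_zero_left] at hbc; exact lt_irrefl _ hbc
      · intro q hqQ
        rcases hcov q hqQ with h | h | h | h <;> rw [h]
        · have h1 := cp_antisymm (b-c0) (q1-c0); linarith
        · have h1 := cp_antisymm (b-c0) (a-c0); linarith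
        · simp [cp_self]
        · linarith
    exact main a b c haQ hbQ hcQ hcov h1a hab hbc h1c
  -- case analysis on the three signs
  have hq1x : x ≠ q1 := Finset.ne_of_mem_erase (hE ▸ (by simp : x ∈ ({x,y,z} : Finset Pt)))
  have hq1y : y ≠ q1 := Finset.ne_of_mem_erase (hE ▸ (by simp : y ∈ ({x,y,z} : Finset Pt)))
  have hq1z : z ≠ q1 := Finset.ne_of_mem_erase (hE ▸ (by simp : z ∈ ({x,y,z} : Finset Pt)))
  have sx := hcp q1 hq1 x hxQ (Ne.symm hq1x)
  have sy := hcp q1 hq1 y hyQ (Ne.symm hq1y)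
  have sz := hcp q1 hq1 z hzQ (Ne.symm hq1z)
  have covperm : ∀ a b c : Pt, ({a,b,c} : Finset Pt) = {x,y,z} →
      (∀ p ∈ Q, p = q1 ∨ p = a ∨ p = b ∨ p = c) := by
    intro a b c habc p hp
    rcases hcover p hp with rfl | rfl | rfl | rfl
    · exact Or.inl rfl
    all_goals
      right
      have : p ∈ ({a,b,c} : Finset Pt) := by rw [habc]; simp
      simp only [Finset.mem_insert, Finset.mem_singleton] at this
      tauto
  rcases sx.lt_or_gt with hx | hx <;> rcases sy.lt_or_gt with hy | hy <;>
    rcases sz.lt_or_gt with hz | hz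
  · -- all negative
    exfalso
    apply hp_contra (-(q1-c0))
    · intro h0
      have h1 : q1 - c0 = 0 := by
        have h2 : q1 - c0 = -(-(q1-c0)) := by abel
        rw [h2, h0]; simp
      rw [h1, cp_zero_left] at hx; exact lt_irrefl _ hx
    · intro q hqQ
      rw [cp_neg_left]
      rcases hcover q hqQ with h | h | h | h <;> rw [h]
      · simp [cp_self]
      · linarith
      · linarith
      · linarith
  · -- x-, y-, z+ : a=z, b,c from x,y
    rcases (hcp x hxQ y hyQ hxy).lt_or_gt with hxy' | hxy'
    · exact onePos z y x hzQ hyQ hxQ (covperm z y x (by ext p; simp only [Finset.mem_insert, Finset.mem_singleton]; tauto)) hz hy hx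
        (by have h1 := cp_antisymm (x-c0) (y-c0); linarith)
    · exact onePos z x y hzQ hxQ hyQ (covperm z x y (by ext p; simp only [Finset.mem_insert, Finset.mem_singleton]; tauto)) hz hx hy hxy'
  · -- x-, y+, z- : a=y
    rcases (hcp x hxQ z hzQ hxz).lt_or_gt with hxz' | hxz'
    · exact onePos y z x hyQ hzQ hxQ (covperm y z x (by ext p; simp only [Finset.mem_insert, Finset.mem_singleton]; tauto)) hy hz hx
        (by have h1 := cp_antisymm (x-c0) (z-c0); linarith)
    · exact onePos y x z hyQ hxQ hzQ (covperm y x z (by ext p; simp only [Finset.mem_insert, Finset.mem_singleton]; tauto)) hy hx hz hxz'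
  · -- x-, y+, z+ : two pos y,z ; c=x
    rcases (hcp y hyQ z hzQ hyz).lt_or_gt with hyz' | hyz'
    · exact twoPos z y x hzQ hyQ hxQ (covperm z y x (by ext p; simp only [Finset.mem_insert, Finset.mem_singleton]; tauto)) hz hy hx
        (by have h1 := cp_antisymm (y-c0) (z-c0); linarith)
    · exact twoPos y z x hyQ hzQ hxQ (covperm y z x (by ext p; simp only [Finset.mem_insert, Finset.mem_singleton]; tauto)) hy hz hx hyz'
  · -- x+, y-, z- : a=x
    rcases (hcp y hyQ z hzQ hyz).lt_or_gt with hyz' | hyz'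
    · exact onePos x z y hxQ hzQ hyQ (covperm x z y (by ext p; simp only [Finset.mem_insert, Finset.mem_singleton]; tauto)) hx hz hy
        (by have h1 := cp_antisymm (y-c0) (z-c0); linarith)
    · exact onePos x y z hxQ hyQ hzQ (covperm x y z rfl) hx hy hz hyz'
  · -- x+, y-, z+ : two pos x,z ; c=y
    rcases (hcp x hxQ z hzQ hxz).lt_or_gt with hxz' | hxz'
    · exact twoPos z x y hzQ hxQ hyQ (covperm z x y (by ext p; simp only [Finset.mem_insert, Finset.mem_singleton]; tauto)) hz hx hy
        (by have h1 := cp_antisymm (x-c0) (z-c0); linarith)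
    · exact twoPos x z y hxQ hzQ hyQ (covperm x z y (by ext p; simp only [Finset.mem_insert, Finset.mem_singleton]; tauto)) hx hz hy hxz'
  · -- x+, y+, z- : two pos x,y ; c=z
    rcases (hcp x hxQ y hyQ hxy).lt_or_gt with hxy' | hxy'
    · exact twoPos y x z hyQ hxQ hzQ (covperm y x z (by ext p; simp only [Finset.mem_insert, Finset.mem_singleton]; tauto)) hy hx hz
        (by have h1 := cp_antisymm (x-c0) (y-c0); linarith)
    · exact twoPos x y z hxQ hyQ hzQ (covperm x y z rfl) hx hy hz hxy'
  · -- all positive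
    exfalso
    apply hp_contra (q1-c0)
    · intro h0
      rw [h0, cp_zero_left] at hx; exact lt_irrefl _ hx
    · intro q hqQ
      rcases hcover q hqQ with h | h | h | h <;> rw [h]
      · simp [cp_self]
      · linarith
      · linarith
      · linarith

lemma collinear_of_cp_eq_zero {p q r : Pt} (h : cp (q - p) (r - p) = 0) :
    Collinear ℝ ({p, q, r} : Set Pt) := by
  by_cases hqp : q = p
  · have hs : ({p, q, r} : Set Pt) = {p, r} := by rw [hqp]; simp
    rw [hs]; exact collinear_pair ℝ p r
  · rw [collinear_iff_of_mem (Set.mem_insert p {q, r})]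
    refine ⟨q - p, ?_⟩
    rintro x (rfl | rfl | rfl)
    · exact ⟨0, by simp⟩
    · exact ⟨1, by simp⟩
    · have hqp' : ¬((q - p).1 = 0 ∧ (q - p).2 = 0) := by
        intro hc
        apply hqp
        have := sub_eq_zero.mp (Prod.ext hc.1 hc.2)
        exact this
      rcases eq_or_ne (q - p).1 0 with h1 | h1
      · have h2 : (q - p).2 ≠ 0 := fun hc => hqp' ⟨h1, hc⟩
        refine ⟨(x - p).2 / (q - p).2, ?_⟩
        have hx1 : (x - p).1 = 0 := by
          have h' : (q - p).2 * (x - p).1 = 0 := by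
            simp only [cp, h1] at h; linarith
          rcases mul_eq_zero.mp h' with hc | hc
          · exact absurd hc h2
          · exact hc
        have e1 : x.1 = ((x - p).2 / (q - p).2) * (q - p).1 + p.1 := by
          rw [h1, mul_zero, zero_add]
          simp only [Prod.fst_sub] at hx1
          linarith
        have e2 : x.2 = ((x - p).2 / (q - p).2) * (q - p).2 + p.2 := by
          rw [div_mul_cancel₀ _ h2]
          simp only [Prod.snd_sub]; ring
        exact Prod.ext (by simpa using e1) (by simpa using e2)
      · refine ⟨(x - p).1 / (q - p).1, ?_⟩
        have e1 : x.1 = ((x - p).1 / (q - p).1) * (q - p).1 + p.1 := by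
          rw [div_mul_cancel₀ _ h1]
          simp only [Prod.fst_sub]; ring
        have e2 : x.2 = ((x - p).1 / (q - p).1) * (q - p).2 + p.2 := by
          simp only [cp] at h
          rw [div_mul_eq_mul_div, eq_comm, div_add' _ _ _ h1, div_eq_iff h1]
          simp only [Prod.fst_sub, Prod.snd_sub] at h ⊢
          nlinarith [h]
        exact Prod.ext (by simpa using e1) (by simpa using e2)

lemma exists_lexmin (C : Finset Pt) (hne : C.Nonempty) :
    ∃ v ∈ C, ∀ p ∈ C, p ≠ v → dOK (p - v) := by
  classical
  obtain ⟨w, hwC, hw⟩ := C.exists_min_image Prod.fst hne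
  set C' := C.filter (fun p => p.1 = w.1) with hC'
  have hC'ne : C'.Nonempty := ⟨w, by simp [hC', hwC]⟩
  obtain ⟨v, hvC', hv⟩ := C'.exists_min_image Prod.snd hC'ne
  have hvC : v ∈ C := (Finset.mem_filter.mp hvC').1
  have hv1 : v.1 = w.1 := (Finset.mem_filter.mp hvC').2
  refine ⟨v, hvC, fun p hp hpv => ?_⟩
  have hp1 : w.1 ≤ p.1 := hw p hp
  rcases lt_or_eq_of_le (hv1 ▸ hp1 : v.1 ≤ p.1) with h1 | h1
  · left; simp only [Prod.fst_sub]; linarith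
  · right
    have hpC' : p ∈ C' := Finset.mem_filter.mpr ⟨hp, by rw [← h1, hv1]⟩
    have h2 : v.2 ≤ p.2 := hv p hpC'
    have h2' : v.2 ≠ p.2 := by
      intro hc
      exact hpv (Prod.ext h1.symm hc.symm)
    constructor
    · simp only [Prod.fst_sub]; linarith
    · simp only [Prod.snd_sub]; cases lt_or_eq_of_le h2 with
      | inl h => linarith
      | inr h => exact absurd h h2'

lemma hb_step (C : Finset Pt) (c0 : Pt) (hc0 : c0 ∈ C) (hne : (C.erase c0).Nonempty)
    (hint : c0 ∈ interior (convexHull ℝ (C : Set Pt))) :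
    c0 ∈ convexHull ℝ ((C.erase c0 : Finset Pt) : Set Pt) := by
  by_contra hcon
  have hKconv : Convex ℝ (convexHull ℝ ((C.erase c0 : Finset Pt) : Set Pt)) :=
    convex_convexHull ℝ _
  have hKclosed : IsClosed (convexHull ℝ ((C.erase c0 : Finset Pt) : Set Pt)) :=
    ((C.erase c0).finite_toSet.isCompact_convexHull ℝ).isClosed
  obtain ⟨f, u, hfa, hu⟩ := geometric_hahn_banach_closed_point hKconv hKclosed hcon
  obtain ⟨a0, ha0⟩ := hne
  have hfa0 : f a0 < u := hfa a0 (subset_convexHull ℝ _ (by exact_mod_cast ha0))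
  have hCsub : (C : Set Pt) ⊆ {z : Pt | f z ≤ f c0} := by
    intro p hp
    simp only [Set.mem_setOf_eq]
    rcases eq_or_ne p c0 with rfl | hpc
    · exact le_refl _
    · have : p ∈ C.erase c0 := Finset.mem_erase.mpr ⟨hpc, by exact_mod_cast hp⟩
      have := hfa p (subset_convexHull ℝ _ (by exact_mod_cast this))
      linarith
  have hlin : IsLinearMap ℝ (f : Pt → ℝ) := ⟨f.map_add, f.map_smul⟩
  have hhull : convexHull ℝ (C : Set Pt) ⊆ {z : Pt | f z ≤ f c0} :=
    convexHull_min hCsub (convex_halfSpace_le hlin _)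
  have hw : 0 < f (c0 - a0) := by rw [map_sub]; linarith
  have hkey := halfplane_interior (f : Pt → ℝ) f.map_add (fun t x => by
      rw [f.map_smul]; rfl) _ hw (f c0)
  have := hkey (interior_mono hhull hint)
  simp only [Set.mem_setOf_eq] at this
  exact lt_irrefl _ this

lemma int_erase (C : Finset Pt) (c0 : Pt) (hc0 : c0 ∈ C) (hne : (C.erase c0).Nonempty)
    (hint : c0 ∈ interior (convexHull ℝ (C : Set Pt))) :
    c0 ∈ interior (convexHull ℝ ((C.erase c0 : Finset Pt) : Set Pt)) := by
  have h1 : (C : Set Pt) ⊆ convexHull ℝ ((C.erase c0 : Finset Pt) : Set Pt) := by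
    intro p hp
    rcases eq_or_ne p c0 with rfl | hpc
    · exact hb_step C p hc0 hne hint
    · exact subset_convexHull ℝ _ (by
        exact_mod_cast Finset.mem_erase.mpr ⟨hpc, by exact_mod_cast hp⟩)
  have h2 := convexHull_min h1 (convex_convexHull ℝ _)
  exact interior_mono h2 hint

lemma count_stab (D : Finset Pt) (n : ℕ) (T : Fin n → Set Pt)
    (hdisj : ∀ i j, i ≠ j → ∀ z, z ∈ T i → z ∉ T j)
    (hstab : ∀ i, ∃ d ∈ D, d ∈ T i) : n ≤ D.card := by
  classical
  choose g hgD hgT using hstab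
  have hinj : Set.InjOn g (Finset.univ : Finset (Fin n)) := by
    intro i _ j _ hij
    by_contra hne
    exact hdisj i j hne (g i) (hgT i) (hij ▸ hgT j)
  calc n = (Finset.univ : Finset (Fin n)).card := by simp
  _ ≤ D.card := Finset.card_le_card_of_injOn g (fun i _ => hgD i) hinj

lemma count_stab_cover (D : Finset Pt) (n : ℕ) (T : Fin n → Set Pt)
    (hdisj : ∀ i j, i ≠ j → ∀ z, z ∈ T i → z ∉ T j)
    (hstab : ∀ i, ∃ d ∈ D, d ∈ T i) (hcard : D.card = n) :
    ∀ d ∈ D, ∃ i, d ∈ T i := by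
  classical
  choose g hgD hgT using hstab
  have hinj : Set.InjOn g (Finset.univ : Finset (Fin n)) := by
    intro i _ j _ hij
    by_contra hne
    exact hdisj i j hne (g i) (hgT i) (hij ▸ hgT j)
  have himage : (Finset.univ : Finset (Fin n)).image g = D := by
    apply Finset.eq_of_subset_of_card_le
    · intro d hd
      obtain ⟨i, _, rfl⟩ := Finset.mem_image.mp hd
      exact hgD i
    · rw [Finset.card_image_of_injOn hinj]
      simp [hcard]
  intro d hd
  rw [← himage] at hd
  obtain ⟨i, _, rfl⟩ := Finset.mem_image.mp hd
  exact ⟨i, hgT i⟩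


/-- Any 2-colored point set of 8 points in general position whose two color classes
have different sizes contains a monochromatic empty triangle. -/
theorem eight_points_unequal_classes_empty_mono_triangle
    (S R B : Finset (ℝ × ℝ)) (hgp : GenPos (S : Set (ℝ × ℝ)))
    (hcard : S.card = 8) (hpart : R ∪ B = S) (hdisj : Disjoint R B)
    (hne : R.card ≠ B.card) :
    ∃ a ∈ S, ∃ b ∈ S, ∃ d ∈ S, a ≠ b ∧ a ≠ d ∧ b ≠ d ∧
      ((a ∈ R ∧ b ∈ R ∧ d ∈ R) ∨ (a ∈ B ∧ b ∈ B ∧ d ∈ B)) ∧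
      ∀ p ∈ S, p ∉ interior (convexHull ℝ ({a, b, d} : Set (ℝ × ℝ))) := by
  classical
  have hsum : R.card + B.card = 8 := by
    rw [← Finset.card_union_of_disjoint hdisj, hpart, hcard]
  -- choose the larger class C and the smaller D
  obtain ⟨C, D, hCD, hCcard, hCcol, hDcol⟩ :
      ∃ C D : Finset Pt, C ∪ D = S ∧ 5 ≤ C.card ∧
        (C = R ∧ D = B ∨ C = B ∧ D = R) ∧ C.card + D.card = 8 := by
    rcases lt_or_gt_of_ne hne with h | h
    · exact ⟨B, R, by rw [Finset.union_comm]; exact hpart, by omega, Or.inr ⟨rfl, rfl⟩, by omega⟩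
    · exact ⟨R, B, hpart, by omega, Or.inl ⟨rfl, rfl⟩, by omega⟩
  have hCsub : C ⊆ S := by rw [← hCD]; exact Finset.subset_union_left
  have hDsub : D ⊆ S := by rw [← hCD]; exact Finset.subset_union_right
  -- general position in cross-product form
  have hcp : ∀ p ∈ S, ∀ q ∈ S, ∀ r ∈ S, p ≠ q → p ≠ r → q ≠ r →
      cp (q - p) (r - p) ≠ 0 := by
    intro p hp q hq r hr hpq hpr hqr hc
    exact hgp p (by exact_mod_cast hp) q (by exact_mod_cast hq) r (by exact_mod_cast hr)
      hpq hpr hqr (collinear_of_cp_eq_zero hc)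
  -- goal packaging
  have package : ∀ C' : Finset Pt, C' ⊆ S → (C' = R ∨ C' = B) →
      ∀ a b d : Pt, a ∈ C' → b ∈ C' → d ∈ C' → a ≠ b → a ≠ d → b ≠ d →
      (∀ p ∈ S, p ∉ interior (convexHull ℝ ({a, b, d} : Set Pt))) →
      (∃ a ∈ S, ∃ b ∈ S, ∃ d ∈ S, a ≠ b ∧ a ≠ d ∧ b ≠ d ∧
        ((a ∈ R ∧ b ∈ R ∧ d ∈ R) ∨ (a ∈ B ∧ b ∈ B ∧ d ∈ B)) ∧
        ∀ p ∈ S, p ∉ interior (convexHull ℝ ({a, b, d} : Set (ℝ × ℝ)))) := by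
    intro C' hsub hcol a b d ha hb hd hab had hbd hempty
    refine ⟨a, hsub ha, b, hsub hb, d, hsub hd, hab, had, hbd, ?_, hempty⟩
    rcases hcol with rfl | rfl
    · exact Or.inl ⟨ha, hb, hd⟩
    · exact Or.inr ⟨ha, hb, hd⟩
  have hCcol' : C = R ∨ C = B := by rcases hCcol with ⟨h, _⟩ | ⟨h, _⟩ <;> [exact Or.inl h; exact Or.inr h]
  have hDcol' : D = R ∨ D = B := by rcases hCcol with ⟨_, h⟩ | ⟨_, h⟩ <;> [exact Or.inr h; exact Or.inl h]
  -- lexmin and sorted fan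
  obtain ⟨v, hvC, hvlex⟩ := exists_lexmin C (by rw [← Finset.card_pos]; omega)
  have hvS : v ∈ S := hCsub hvC
  set P := C.erase v with hP
  have hdP : ∀ p ∈ P, dOK (p - v) := by
    intro p hp
    exact hvlex p (Finset.mem_of_mem_erase hp) (Finset.ne_of_mem_erase hp)
  have hcpP : ∀ p ∈ P, ∀ q ∈ P, p ≠ q → cp (p - v) (q - v) ≠ 0 := by
    intro p hp q hq hpq
    exact hcp v hvS p (hCsub (Finset.mem_of_mem_erase hp)) q
      (hCsub (Finset.mem_of_mem_erase hq))
      (Ne.symm (Finset.ne_of_mem_erase hp)) (Ne.symm (Finset.ne_of_mem_erase hq)) hpq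
  obtain ⟨l, hnd, hmem, hpw, hlen⟩ := exists_sorted v P hdP hcpP
  have hdl : ∀ p ∈ l, dOK (p - v) := fun p hp => hdP p ((hmem p).mp hp)
  have hlenP : l.length = C.card - 1 := by
    rw [hlen, hP, Finset.card_erase_of_mem hvC]
  have hlen4 : 4 ≤ l.length := by omega
  set N := l.length - 1 with hN
  have hNlt : ∀ i : Fin N, (i : ℕ) + 1 < l.length := by
    intro i; have := i.2; omega
  set T : Fin N → Set Pt := fun i =>
    interior (convexHull ℝ
      ({v, l[(i : ℕ)]'(by have := hNlt i; omega), l[(i : ℕ)+1]'(hNlt i)} : Set Pt)) with hT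
  have hTdisj : ∀ i j, i ≠ j → ∀ z, z ∈ T i → z ∉ T j := by
    intro i j hij z hzi hzj
    rcases lt_trichotomy (i : ℕ) (j : ℕ) with h | h | h
    · exact fan_disjoint v l hdl hpw (hNlt i) (hNlt j) h z hzi hzj
    · exact hij (Fin.ext h)
    · exact fan_disjoint v l hdl hpw (hNlt j) (hNlt i) h z hzj hzi
  have hTC : ∀ i : Fin N, ∀ q ∈ C, q ∉ T i := by
    intro i q hq
    apply fan_empty v l hdl hpw (hNlt i)
    rcases eq_or_ne q v with rfl | hqv
    · exact Or.inl rfl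
    · exact Or.inr ((hmem q).mpr (Finset.mem_erase.mpr ⟨hqv, hq⟩))
  have hliC : ∀ (i : ℕ) (hi : i < l.length), l[i]'hi ∈ C := by
    intro i hi
    exact Finset.mem_of_mem_erase ((hmem _).mp (List.getElem_mem hi))
  have hlivne : ∀ (i : ℕ) (hi : i < l.length), l[i]'hi ≠ v := by
    intro i hi
    exact Finset.ne_of_mem_erase ((hmem _).mp (List.getElem_mem hi))
  have hline : ∀ (i j : ℕ) (hi : i < l.length) (hj : j < l.length), i < j →
      l[i]'hi ≠ l[j]'hj := by
    intro i j hi hj hij heq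
    have := fan_cone v l hpw hi hj hij
    rw [heq, cp_self] at this
    exact lt_irrefl _ this
  by_cases hfree : ∃ i : Fin N, ∀ d ∈ D, d ∉ T i
  · obtain ⟨i, hi⟩ := hfree
    refine package C hCsub hCcol' v (l[(i:ℕ)]'(by have := hNlt i; omega))
      (l[(i:ℕ)+1]'(hNlt i)) hvC (hliC _ _) (hliC _ _)
      (Ne.symm (hlivne _ _)) (Ne.symm (hlivne _ _)) (hline _ _ _ _ (by omega)) ?_
    intro p hp
    rw [← hCD] at hp
    rcases Finset.mem_union.mp hp with hpC | hpD
    · exact hTC i p hpC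
    · exact hi p hpD
  · push_neg at hfree
    have hstab : ∀ i : Fin N, ∃ d ∈ D, d ∈ T i := hfree
    have hle := count_stab D N T hTdisj hstab
    have hC5 : C.card = 5 := by omega
    have hD3 : D.card = 3 := by omega
    have hDN : D.card = N := by omega
    have hcover := count_stab_cover D N T hTdisj hstab hDN
    by_cases hc0ex : ∃ c0 ∈ C, c0 ∈ interior (convexHull ℝ (D : Set Pt))
    · -- cyclic fan case
      obtain ⟨c0, hc0C, hc0int⟩ := hc0ex
      have hc0S : c0 ∈ S := hCsub hc0C
      -- D is inside conv C
      have hDsubhull : (D : Set Pt) ⊆ convexHull ℝ (C : Set Pt) := by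
        intro d hd
        obtain ⟨i, hdi⟩ := hcover d (by exact_mod_cast hd)
        have h1 : T i ⊆ convexHull ℝ
            ({v, l[(i : ℕ)]'(by have := hNlt i; omega), l[(i : ℕ)+1]'(hNlt i)} : Set Pt) :=
          interior_subset
        have h2 : ({v, l[(i : ℕ)]'(by have := hNlt i; omega),
            l[(i : ℕ)+1]'(hNlt i)} : Set Pt) ⊆ (C : Set Pt) := by
          rintro x (rfl | rfl | rfl)
          · exact_mod_cast hvC
          · exact_mod_cast hliC _ _
          · exact_mod_cast hliC _ _
        exact convexHull_mono h2 (h1 hdi)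
      have hint : c0 ∈ interior (convexHull ℝ (C : Set Pt)) := by
        have := convexHull_min hDsubhull (convex_convexHull ℝ _)
        exact interior_mono this hc0int
      set Q := C.erase c0 with hQ
      have hQcard : Q.card = 4 := by
        rw [hQ, Finset.card_erase_of_mem hc0C]; omega
      have hQne : Q.Nonempty := by rw [← Finset.card_pos]; omega
      have hintQ := int_erase C c0 hc0C hQne hint
      have hcpQ : ∀ p ∈ Q, ∀ q ∈ Q, p ≠ q → cp (p - c0) (q - c0) ≠ 0 := by
        intro p hp q hq hpq
        exact hcp c0 hc0S p (hCsub (Finset.mem_of_mem_erase hp)) q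
          (hCsub (Finset.mem_of_mem_erase hq))
          (Ne.symm (Finset.ne_of_mem_erase hp)) (Ne.symm (Finset.ne_of_mem_erase hq)) hpq
      obtain ⟨t, ht1, ht2, ht3⟩ := cyclic_fan c0 Q hQcard (Finset.notMem_erase c0 C) hcpQ hintQ
      by_cases hfree2 : ∃ i : Fin 4, ∀ d ∈ D,
          d ∉ interior (convexHull ℝ ({c0, (t i).1, (t i).2} : Set Pt))
      · obtain ⟨i, hi⟩ := hfree2
        obtain ⟨hm1, hm2, hm3⟩ := ht1 i
        have hne1 : c0 ≠ (t i).1 := Ne.symm (Finset.ne_of_mem_erase hm1)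
        have hne2 : c0 ≠ (t i).2 := Ne.symm (Finset.ne_of_mem_erase hm2)
        have hne3 : (t i).1 ≠ (t i).2 := by
          intro heq
          rw [heq, cp_self] at hm3
          exact lt_irrefl _ hm3
        refine package C hCsub hCcol' c0 (t i).1 (t i).2 hc0C
          (Finset.mem_of_mem_erase hm1) (Finset.mem_of_mem_erase hm2) hne1 hne2 hne3 ?_
        intro p hp
        rw [← hCD] at hp
        rcases Finset.mem_union.mp hp with hpC | hpD
        · apply ht2 i p
          rcases eq_or_ne p c0 with rfl | hpc
          · exact Or.inl rfl
          · exact Or.inr (Finset.mem_erase.mpr ⟨hpc, hpC⟩)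
        · exact hi p hpD
      · push_neg at hfree2
        have := count_stab D 4 (fun i =>
          interior (convexHull ℝ ({c0, (t i).1, (t i).2} : Set Pt))) ht3 hfree2
        omega
    · -- D-triangle is empty
      push_neg at hc0ex
      obtain ⟨d1, d2, d3, h12, h13, h23, hDeq⟩ := Finset.card_eq_three.mp hD3
      have hd1D : d1 ∈ D := by rw [hDeq]; simp
      have hd2D : d2 ∈ D := by rw [hDeq]; simp
      have hd3D : d3 ∈ D := by rw [hDeq]; simp
      have hd1S := hDsub hd1D
      have hd2S := hDsub hd2D
      have hd3S := hDsub hd3D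
      have hsetD : (D : Set Pt) = {d1, d2, d3} := by rw [hDeq]; simp
      refine package D hDsub hDcol' d1 d2 d3 hd1D hd2D hd3D h12 h13 h23 ?_
      intro p hp
      rw [← hCD] at hp
      rcases Finset.mem_union.mp hp with hpC | hpD
      · intro hmem'
        apply hc0ex p (by exact hpC)
        rw [hsetD]
        exact hmem'
      · rw [hDeq] at hpD
        simp only [Finset.mem_insert, Finset.mem_singleton] at hpD
        rcases hpD with rfl | rfl | rfl
        · exact vertex_not_mem_interior (hcp p hd1S d2 hd2S d3 hd3S h12 h13 h23)
        · have hset2 : ({d1, p, d3} : Set Pt) = {p, d1, d3} := by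
            rw [Set.insert_comm]
          rw [hset2]
          exact vertex_not_mem_interior (hcp p hd2S d1 hd1S d3 hd3S (Ne.symm h12) h23 h13)
        · have hset3 : ({d1, d2, p} : Set Pt) = {p, d1, d2} := by
            ext w; simp only [Set.mem_insert_iff, Set.mem_singleton_iff]; tauto
          rw [hset3]
          exact vertex_not_mem_interior (hcp p hd3S d1 hd1S d2 hd2S (Ne.symm h13) (Ne.symm h23) h12)
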